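/- Let p > 2. If w : ℝ → ℝ is a twice continuously differentiable function, not identically zero, satisfying w''(x) − w(x) + |w(x)|^(p−1)·w(x) = 0 for all x ∈ ℝ and w(x) → 0 as x → +∞ and as x → −∞, then there exists a ∈ ℝ such that either w(x) = Q(x−a) for all x, or w(x) = −Q(x−a) for all x. -/

import Mathlib

open Real Set Filter Topology

/-- The ground state of the one-dimensional nonlinear Klein-Gordon equation. -/
noncomputable def Q (p : ℝ) (x : ℝ) : ℝ :=
  ((p + 1) / (2 * Real.cosh ((p - 1) / 2 * x) ^ 2)) ^ (1 / (p - 1))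


lemma rpow_succ' {t : ℝ} (ht : 0 < t) (q : ℝ) : t ^ q = t ^ (q - 1) * t := by
  nth_rewrite 3 [← Real.rpow_one t]
  rw [← Real.rpow_add ht]; ring_nf

lemma hasDerivAt_signed_rpow {q : ℝ} (hq : 1 < q) (a : ℝ) :
    HasDerivAt (fun t : ℝ => |t| ^ (q - 1) * t) (q * |a| ^ (q - 1)) a := by
  rcases lt_trichotomy a 0 with ha | ha | ha
  · have h2 : HasDerivAt (fun u : ℝ => u ^ q) (q * (-a) ^ (q - 1)) (-a) :=
      Real.hasDerivAt_rpow_const (Or.inl (by linarith))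
    have h1 : HasDerivAt (fun t : ℝ => -((-t) ^ q)) (q * (-a) ^ (q - 1)) a := by
      have h3 := (h2.comp a (hasDerivAt_neg a)).neg
      exact h3.congr_deriv (by ring)
    have hEq : (fun t : ℝ => |t| ^ (q - 1) * t) =ᶠ[𝓝 a] (fun t : ℝ => -((-t) ^ q)) := by
      filter_upwards [eventually_lt_nhds ha] with t ht
      rw [abs_of_neg ht, rpow_succ' (by linarith : (0:ℝ) < -t) q]; ring
    have := h1.congr_of_eventuallyEq hEq
    rwa [abs_of_neg ha]
  · subst ha
    rw [hasDerivAt_iff_tendsto_slope]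
    have hcong : ∀ t ∈ ({(0:ℝ)}ᶜ : Set ℝ), |t| ^ (q - 1) = slope (fun t : ℝ => |t| ^ (q - 1) * t) 0 t := by
      intro t ht
      simp only [slope_def_field, mem_compl_iff, mem_singleton_iff] at *
      rw [eq_div_iff (sub_ne_zero.mpr ht)]
      simp
    have hlim : Tendsto (fun t : ℝ => |t| ^ (q - 1)) (𝓝[≠] (0:ℝ)) (𝓝 (q * |(0:ℝ)| ^ (q - 1))) := by
      have hc : ContinuousAt (fun t : ℝ => |t| ^ (q - 1)) 0 :=
        (Real.continuousAt_rpow_const _ _ (Or.inr (by linarith))).comp continuous_abs.continuousAt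
      have := hc.tendsto.mono_left (nhdsWithin_le_nhds (s := {(0:ℝ)}ᶜ))
      simp only [abs_zero, Real.zero_rpow (by linarith : q - 1 ≠ 0)] at this ⊢
      simpa using this
    exact hlim.congr' (eventuallyEq_nhdsWithin_of_eqOn hcong)
  · have h1 : HasDerivAt (fun t : ℝ => t ^ q) (q * a ^ (q - 1)) a :=
      Real.hasDerivAt_rpow_const (Or.inl (ne_of_gt ha))
    have hEq : (fun t : ℝ => |t| ^ (q - 1) * t) =ᶠ[𝓝 a] (fun t : ℝ => t ^ q) := by
      filter_upwards [eventually_gt_nhds ha] with t ht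
      rw [abs_of_pos ht, rpow_succ' ht q]
    have := h1.congr_of_eventuallyEq hEq
    rwa [abs_of_pos ha]

/-- first derivative of Q -/
noncomputable def QD (p : ℝ) (x : ℝ) : ℝ :=
  -(((p + 1) / 2) ^ (1 / (p - 1))) * Real.sinh ((p - 1) / 2 * x) *
    Real.cosh ((p - 1) / 2 * x) ^ (-(2 / (p - 1)) - 1)

lemma Q_eq {p : ℝ} (hp : 2 < p) (x : ℝ) :
    Q p x = ((p + 1) / 2) ^ (1 / (p - 1)) * Real.cosh ((p - 1) / 2 * x) ^ (-(2 / (p - 1))) := by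
  have hc : 0 < Real.cosh ((p - 1) / 2 * x) := Real.cosh_pos _
  have h2 : Real.cosh ((p - 1) / 2 * x) ^ (-(2 / (p - 1)))
      = ((Real.cosh ((p - 1) / 2 * x) ^ (2 : ℕ) : ℝ)) ^ (-(1 / (p - 1))) := by
    rw [← Real.rpow_natCast _ 2, ← Real.rpow_mul hc.le]
    norm_num
    ring_nf
  rw [Q, h2, Real.rpow_neg (by positivity), ← div_eq_mul_inv,
    ← Real.div_rpow (by linarith) (by positivity)]
  congr 1
  rw [div_div]

lemma Q_pos {p : ℝ} (hp : 2 < p) (x : ℝ) : 0 < Q p x := by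
  rw [Q_eq hp]
  have hc : 0 < Real.cosh ((p - 1) / 2 * x) := Real.cosh_pos _
  positivity

lemma Q_zero {p : ℝ} (hp : 2 < p) : Q p 0 = ((p + 1) / 2) ^ (1 / (p - 1)) := by
  rw [Q_eq hp]; simp

lemma QD_zero (p : ℝ) : QD p 0 = 0 := by simp [QD]

lemma hasDerivAt_Q {p : ℝ} (hp : 2 < p) (x : ℝ) : HasDerivAt (Q p) (QD p x) x := by
  have hc : 0 < Real.cosh ((p - 1) / 2 * x) := Real.cosh_pos _
  have h0 : HasDerivAt (fun y : ℝ => (p - 1) / 2 * y) ((p - 1) / 2) x := by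
    simpa using (hasDerivAt_id x).const_mul ((p - 1) / 2)
  have h1 : HasDerivAt (fun y : ℝ => Real.cosh ((p - 1) / 2 * y))
      (Real.sinh ((p - 1) / 2 * x) * ((p - 1) / 2)) x := h0.cosh
  have h2 : HasDerivAt (fun y : ℝ => y ^ (-(2 / (p - 1))))
      ((-(2 / (p - 1))) * Real.cosh ((p - 1) / 2 * x) ^ (-(2 / (p - 1)) - 1))
      (Real.cosh ((p - 1) / 2 * x)) := Real.hasDerivAt_rpow_const (Or.inl (ne_of_gt hc))
  have h3 := ((h2.comp x h1).const_mul (((p + 1) / 2) ^ (1 / (p - 1))))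
  have heq : (fun y => ((p + 1) / 2) ^ (1 / (p - 1)) *
      ((fun y : ℝ => y ^ (-(2 / (p - 1)))) ∘ fun y : ℝ => Real.cosh ((p - 1) / 2 * y)) y) = Q p := by
    funext y
    simp only [Function.comp_apply]
    rw [Q_eq hp]
  rw [heq] at h3
  refine h3.congr_deriv ?_
  rw [QD]
  have hne : p - 1 ≠ 0 := by linarith
  field_simp

lemma Q_rpow_self {p : ℝ} (hp : 2 < p) (x : ℝ) :
    |Q p x| ^ (p - 1) * Q p x = (p + 1) / 2 * (((p + 1) / 2) ^ (1 / (p - 1)) *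
      Real.cosh ((p - 1) / 2 * x) ^ (-(2 / (p - 1)) - 2)) := by
  have hc : 0 < Real.cosh ((p - 1) / 2 * x) := Real.cosh_pos _
  have hne : p - 1 ≠ 0 := by linarith
  have e1 : 1 / (p - 1) * (p - 1) = 1 := by field_simp
  have e2 : -(2 / (p - 1)) * (p - 1) = -2 := by field_simp
  have e4 : Real.cosh ((p-1)/2*x) ^ (-(2:ℝ)) * Real.cosh ((p-1)/2*x) ^ (-(2/(p-1)))
      = Real.cosh ((p-1)/2*x) ^ (-(2/(p-1)) - 2) := by
    rw [← Real.rpow_add hc]; ring_nf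
  rw [abs_of_pos (Q_pos hp x), Q_eq hp,
    Real.mul_rpow (by positivity) (by positivity),
    ← Real.rpow_mul (by linarith : (0:ℝ) ≤ (p+1)/2),
    ← Real.rpow_mul hc.le, e1, e2, Real.rpow_one, ← e4]
  ring

lemma hasDerivAt_QD {p : ℝ} (hp : 2 < p) (x : ℝ) :
    HasDerivAt (QD p) (Q p x - |Q p x| ^ (p - 1) * Q p x) x := by
  have hc : 0 < Real.cosh ((p - 1) / 2 * x) := Real.cosh_pos _
  have hne : p - 1 ≠ 0 := by linarith
  have h0 : ∀ y : ℝ, HasDerivAt (fun y : ℝ => (p - 1) / 2 * y) ((p - 1) / 2) y := by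
    intro y; simpa using (hasDerivAt_id y).const_mul ((p - 1) / 2)
  have h1 : HasDerivAt (fun y : ℝ => Real.sinh ((p - 1) / 2 * y))
      (Real.cosh ((p - 1) / 2 * x) * ((p - 1) / 2)) x := (h0 x).sinh
  have h2 : HasDerivAt (fun y : ℝ => y ^ (-(2 / (p - 1)) - 1))
      ((-(2 / (p - 1)) - 1) * Real.cosh ((p - 1) / 2 * x) ^ (-(2 / (p - 1)) - 1 - 1))
      (Real.cosh ((p - 1) / 2 * x)) := Real.hasDerivAt_rpow_const (Or.inl (ne_of_gt hc))
  have h3 : HasDerivAt (fun y : ℝ => Real.cosh ((p - 1) / 2 * y) ^ (-(2 / (p - 1)) - 1))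
      ((-(2 / (p - 1)) - 1) * Real.cosh ((p - 1) / 2 * x) ^ (-(2 / (p - 1)) - 1 - 1) *
        (Real.sinh ((p - 1) / 2 * x) * ((p - 1) / 2))) x := by have := h2.comp x (h0 x).cosh; exact this
  have h4 := (h1.mul h3).const_mul (-(((p + 1) / 2) ^ (1 / (p - 1))))
  have heq : (fun y => -(((p + 1) / 2) ^ (1 / (p - 1))) * (Real.sinh ((p - 1) / 2 * y) *
      Real.cosh ((p - 1) / 2 * y) ^ (-(2 / (p - 1)) - 1))) = QD p := by
    funext y; rw [QD]; ring
  simp only [Pi.mul_apply] at h4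
  rw [heq] at h4
  refine h4.congr_deriv ?_
  symm
  rw [Q_rpow_self hp, Q_eq hp]
  have key : ∀ a b : ℝ, a = b + 1 → Real.cosh ((p-1)/2*x) ^ a
      = Real.cosh ((p-1)/2*x) ^ b * Real.cosh ((p-1)/2*x) := fun a b hab => by
    rw [hab, Real.rpow_add hc, Real.rpow_one]
  have hA1 := key (-(2/(p-1)) - 1) (-(2/(p-1)) - 2) (by ring)
  have hA1' : Real.cosh ((p-1)/2*x) ^ (-(2/(p-1)) - 1 - 1)
      = Real.cosh ((p-1)/2*x) ^ (-(2/(p-1)) - 2) := by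
    congr 1; ring
  have hA2 : Real.cosh ((p-1)/2*x) ^ (-(2/(p-1)))
      = Real.cosh ((p-1)/2*x) ^ (-(2/(p-1)) - 2) * Real.cosh ((p-1)/2*x) *
        Real.cosh ((p-1)/2*x) := by
    rw [key (-(2/(p-1))) (-(2/(p-1)) - 1) (by ring), hA1]
  have hs : Real.sinh ((p-1)/2*x) ^ 2 = Real.cosh ((p-1)/2*x) ^ 2 - 1 := by
    have := Real.cosh_sq ((p-1)/2*x); linarith
  have hu : (p - 1) * (p - 1)⁻¹ = 1 := mul_inv_cancel₀ hne
  rw [hA2, hA1, hA1']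
  linear_combination (((p-1)/2) * (-(2/(p-1)) - 1) * (((p+1)/2) ^ (1/(p-1))) *
      (Real.cosh ((p-1)/2*x) ^ (-(2/(p-1)) - 2))) * hs +
    ((((p+1)/2) ^ (1/(p-1))) * (Real.cosh ((p-1)/2*x) ^ (-(2/(p-1)) - 2)) *
      (1 - Real.cosh ((p-1)/2*x) ^ 2)) * hu

lemma Q_le {p : ℝ} (hp : 2 < p) (x : ℝ) : Q p x ≤ ((p + 1) / 2) ^ (1 / (p - 1)) := by
  rw [Q_eq hp]
  have hc : 1 ≤ Real.cosh ((p - 1) / 2 * x) := Real.one_le_cosh _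
  have h1 : Real.cosh ((p - 1) / 2 * x) ^ (-(2 / (p - 1))) ≤ 1 :=
    Real.rpow_le_one_of_one_le_of_nonpos hc (by
      rw [neg_nonpos]; exact div_nonneg (by norm_num) (by linarith))
  calc ((p + 1) / 2) ^ (1 / (p - 1)) * Real.cosh ((p - 1) / 2 * x) ^ (-(2 / (p - 1)))
      ≤ ((p + 1) / 2) ^ (1 / (p - 1)) * 1 := by
        apply mul_le_mul_of_nonneg_left h1 (by positivity)
    _ = ((p + 1) / 2) ^ (1 / (p - 1)) := mul_one _

lemma QD_abs_le {p : ℝ} (hp : 2 < p) (x : ℝ) :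
    |QD p x| ≤ ((p + 1) / 2) ^ (1 / (p - 1)) := by
  have hc : 0 < Real.cosh ((p - 1) / 2 * x) := Real.cosh_pos _
  have hs : |Real.sinh ((p - 1) / 2 * x)| ≤ Real.cosh ((p - 1) / 2 * x) := by
    have h1 := Real.cosh_sq ((p - 1) / 2 * x)
    have h2 : Real.sinh ((p-1)/2*x) ^ 2 ≤ Real.cosh ((p-1)/2*x) ^ 2 := by nlinarith
    exact abs_le_of_sq_le_sq h2 (Real.cosh_pos _).le
  have hC : (0:ℝ) < ((p + 1) / 2) ^ (1 / (p - 1)) := by positivity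
  have hA : (0:ℝ) < Real.cosh ((p - 1) / 2 * x) ^ (-(2 / (p - 1)) - 1) :=
    Real.rpow_pos_of_pos hc _
  rw [QD, abs_mul, abs_mul, abs_neg, abs_of_pos hC, abs_of_pos hA]
  calc ((p + 1) / 2) ^ (1 / (p - 1)) * |Real.sinh ((p - 1) / 2 * x)| *
        Real.cosh ((p - 1) / 2 * x) ^ (-(2 / (p - 1)) - 1)
      ≤ ((p + 1) / 2) ^ (1 / (p - 1)) * Real.cosh ((p - 1) / 2 * x) *
        Real.cosh ((p - 1) / 2 * x) ^ (-(2 / (p - 1)) - 1) := by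
        apply mul_le_mul_of_nonneg_right (mul_le_mul_of_nonneg_left hs hC.le) hA.le
    _ = ((p + 1) / 2) ^ (1 / (p - 1)) * Real.cosh ((p - 1) / 2 * x) ^ (-(2 / (p - 1))) := by
        rw [show -(2/(p-1)) = (-(2/(p-1)) - 1) + 1 by ring, Real.rpow_add hc, Real.rpow_one]
        ring
    _ ≤ ((p + 1) / 2) ^ (1 / (p - 1)) := by
        rw [← Q_eq hp]; exact Q_le hp x

noncomputable def FF (p : ℝ) : ℝ × ℝ → ℝ × ℝ := fun y => (y.2, y.1 - |y.1| ^ (p - 1) * y.1)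

lemma g_lipschitz {p : ℝ} (hp : 2 < p) {R : ℝ} (hR : 0 ≤ R) {a b : ℝ}
    (ha : |a| ≤ R) (hb : |b| ≤ R) :
    |(|a| ^ (p - 1) * a) - |b| ^ (p - 1) * b| ≤ p * R ^ (p - 1) * |a - b| := by
  have key := Convex.norm_image_sub_le_of_norm_hasDerivWithin_le
    (f := fun t : ℝ => |t| ^ (p - 1) * t) (f' := fun t : ℝ => p * |t| ^ (p - 1))
    (s := Icc (-R) R) (C := p * R ^ (p - 1))
    (fun t _ => (hasDerivAt_signed_rpow (by linarith : 1 < p) t).hasDerivWithinAt)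
    (fun t htR => by
      rw [Real.norm_eq_abs, abs_of_nonneg (by positivity)]
      have h1 : |t| ≤ R := abs_le.mpr ⟨htR.1, htR.2⟩
      have h2 : |t| ^ (p - 1) ≤ R ^ (p - 1) :=
        Real.rpow_le_rpow (abs_nonneg t) h1 (by linarith)
      show p * |t| ^ (p - 1) ≤ p * R ^ (p - 1)
      nlinarith)
    (convex_Icc _ _) (abs_le.mp hb) (abs_le.mp ha)
  rw [Real.norm_eq_abs, Real.norm_eq_abs] at key
  exact key

lemma FF_lipschitz {p : ℝ} (hp : 2 < p) {R : ℝ} (hR : 0 ≤ R) :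
    LipschitzOnWith (1 + p * R ^ (p - 1)).toNNReal (FF p)
      (Metric.closedBall (0 : ℝ × ℝ) R) := by
  have hL : (0:ℝ) ≤ p * R ^ (p - 1) := by positivity
  rw [lipschitzOnWith_iff_dist_le_mul]
  intro x hx y hy
  rw [Metric.mem_closedBall, Prod.dist_eq] at hx hy
  simp only [Prod.fst_zero, Prod.snd_zero, dist_zero_right, Real.norm_eq_abs,
    max_le_iff] at hx hy
  have hK : ((1 + p * R ^ (p - 1)).toNNReal : ℝ) = 1 + p * R ^ (p - 1) :=
    Real.coe_toNNReal _ (by linarith)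
  rw [hK, Prod.dist_eq, Prod.dist_eq]
  have hd1 : dist x.1 y.1 ≤ max (dist x.1 y.1) (dist x.2 y.2) := le_max_left _ _
  have hd2 : dist x.2 y.2 ≤ max (dist x.1 y.1) (dist x.2 y.2) := le_max_right _ _
  have hdnn : 0 ≤ max (dist x.1 y.1) (dist x.2 y.2) := le_trans dist_nonneg hd1
  apply max_le
  · show dist x.2 y.2 ≤ _
    nlinarith
  · show dist (x.1 - |x.1| ^ (p-1) * x.1) (y.1 - |y.1| ^ (p-1) * y.1) ≤ _
    rw [Real.dist_eq]
    have hg := g_lipschitz hp hR hx.1 hy.1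
    have : |(x.1 - |x.1| ^ (p-1) * x.1) - (y.1 - |y.1| ^ (p-1) * y.1)|
        ≤ |x.1 - y.1| + |(|x.1| ^ (p-1) * x.1) - |y.1| ^ (p-1) * y.1| := by
      have := abs_sub (x.1 - y.1) ((|x.1| ^ (p-1) * x.1) - |y.1| ^ (p-1) * y.1)
      have h3 : (x.1 - |x.1| ^ (p-1) * x.1) - (y.1 - |y.1| ^ (p-1) * y.1)
          = (x.1 - y.1) - ((|x.1| ^ (p-1) * x.1) - |y.1| ^ (p-1) * y.1) := by ring
      rw [h3]
      exact abs_sub _ _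
    have hxy : |x.1 - y.1| ≤ max (dist x.1 y.1) (dist x.2 y.2) := by
      rw [← Real.dist_eq]; exact hd1
    nlinarith


lemma core_uniqueness {p : ℝ} (hp : 2 < p) (v : ℝ → ℝ)
    (hv1 : ∀ t, HasDerivAt v (deriv v t) t)
    (hv2 : ∀ t, HasDerivAt (deriv v) (v t - |v t| ^ (p - 1) * v t) t)
    (x₀ : ℝ) (hval : v x₀ = ((p + 1) / 2) ^ (1 / (p - 1))) (hder : deriv v x₀ = 0)
    (hb1 : ∀ x, |v x| ≤ ((p + 1) / 2) ^ (1 / (p - 1)))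
    (hb2 : ∀ x, |deriv v x| ≤ ((p + 1) / 2) ^ (1 / (p - 1))) :
    ∀ x, v x = Q p (x - x₀) := by
  set C : ℝ := ((p + 1) / 2) ^ (1 / (p - 1)) with hC
  have hCpos : 0 < C := by rw [hC]; positivity
  set f : ℝ → ℝ × ℝ := fun t => (v t, deriv v t) with hf
  set g : ℝ → ℝ × ℝ := fun t => (Q p (t - x₀), QD p (t - x₀)) with hg
  have hf' : ∀ t, HasDerivAt f (FF p (f t)) t := fun t => (hv1 t).prodMk (hv2 t)
  have hshift : ∀ t : ℝ, HasDerivAt (fun s : ℝ => s - x₀) 1 t := fun t =>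
    (hasDerivAt_id t).sub_const x₀
  have hg' : ∀ t, HasDerivAt g (FF p (g t)) t := by
    intro t
    have h1 : HasDerivAt (fun s : ℝ => Q p (s - x₀)) (QD p (t - x₀)) t := by
      have := (hasDerivAt_Q hp (t - x₀)).comp t (hshift t)
      simpa [Function.comp_def] using this
    have h2 : HasDerivAt (fun s : ℝ => QD p (s - x₀))
        (Q p (t - x₀) - |Q p (t - x₀)| ^ (p - 1) * Q p (t - x₀)) t := by
      have := (hasDerivAt_QD hp (t - x₀)).comp t (hshift t)
      simpa [Function.comp_def] using this
    exact h1.prodMk h2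
  have hfs : ∀ t, f t ∈ Metric.closedBall (0 : ℝ × ℝ) C := by
    intro t
    rw [Metric.mem_closedBall, Prod.dist_eq]
    simp only [Prod.fst_zero, Prod.snd_zero, dist_zero_right, Real.norm_eq_abs]
    exact max_le (hb1 t) (hb2 t)
  have hgs : ∀ t, g t ∈ Metric.closedBall (0 : ℝ × ℝ) C := by
    intro t
    rw [Metric.mem_closedBall, Prod.dist_eq]
    simp only [Prod.fst_zero, Prod.snd_zero, dist_zero_right, Real.norm_eq_abs]
    refine max_le ?_ (QD_abs_le hp _)
    rw [abs_of_pos (Q_pos hp _)]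
    exact Q_le hp _
  have heq0 : f x₀ = g x₀ := by
    rw [hf, hg]
    simp only [sub_self]
    rw [Q_zero hp, QD_zero, hval, hder]
  intro x
  have hab : x₀ ∈ Ioo (min x x₀ - 1) (max x x₀ + 1) :=
    ⟨by have := min_le_right x x₀; linarith, by have := le_max_right x x₀; linarith⟩
  have hxmem : x ∈ Icc (min x x₀ - 1) (max x x₀ + 1) :=
    ⟨by have := min_le_left x x₀; linarith, by have := le_max_left x x₀; linarith⟩
  have key := ODE_solution_unique_of_mem_Icc
    (v := fun _ y => FF p y) (s := fun _ => Metric.closedBall (0 : ℝ × ℝ) C)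
    (K := (1 + p * C ^ (p - 1)).toNNReal)
    (fun _ _ => FF_lipschitz hp hCpos.le)
    hab
    (continuousOn_of_forall_continuousAt fun t _ => (hf' t).continuousAt)
    (fun t _ => hf' t) (fun t _ => hfs t)
    (continuousOn_of_forall_continuousAt fun t _ => (hg' t).continuousAt)
    (fun t _ => hg' t) (fun t _ => hgs t)
    heq0
  have := key hxmem
  exact congrArg Prod.fst this

theorem bound_state_uniqueness (p : ℝ) (hp : 2 < p) (w : ℝ → ℝ)
    (hw : ContDiff ℝ 2 w) (hne : ∃ x, w x ≠ 0)
    (heq : ∀ x : ℝ, deriv (deriv w) x - w x + |w x| ^ (p - 1) * w x = 0)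
    (htop : Filter.Tendsto w Filter.atTop (nhds 0))
    (hbot : Filter.Tendsto w Filter.atBot (nhds 0)) :
    ∃ a : ℝ, (∀ x : ℝ, w x = Q p (x - a)) ∨ (∀ x : ℝ, w x = -Q p (x - a)) := by
  have hp1 : (1:ℝ) < p := by linarith
  -- basic differentiability
  have hw1 : ∀ t, HasDerivAt w (deriv w t) t := fun t =>
    ((hw.differentiable (by norm_num)) t).hasDerivAt
  have hwd : ContDiff ℝ 1 (deriv w) := by
    have h2 : ContDiff ℝ (1 + 1 : WithTop ℕ∞) w := by
      have : (1 + 1 : WithTop ℕ∞) = 2 := by norm_num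
      rw [this]; exact hw
    exact (contDiff_succ_iff_deriv.mp h2).2.2
  have hw2 : ∀ t, HasDerivAt (deriv w) (deriv (deriv w) t) t := fun t =>
    ((hwd.differentiable (by norm_num)) t).hasDerivAt
  have hww : ∀ t, deriv (deriv w) t = w t - |w t| ^ (p - 1) * w t := fun t => by
    have := heq t; linarith
  have hw2' : ∀ t, HasDerivAt (deriv w) (w t - |w t| ^ (p - 1) * w t) t := fun t => by
    rw [← hww t]; exact hw2 t
  -- derivative of a => |a|^(p+1)
  have habs_eq : ∀ a : ℝ, |a| ^ (p + 1) = |a| ^ (p - 1) * a * a := by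
    intro a
    rcases eq_or_ne a 0 with rfl | ha
    · simp [Real.zero_rpow (by linarith : p + 1 ≠ 0)]
    · have hpa : 0 < |a| := abs_pos.mpr ha
      have h2 : |a| ^ ((2:ℕ):ℝ) = a * a := by
        rw [Real.rpow_natCast, sq_abs]; ring
      rw [mul_assoc, ← h2, ← Real.rpow_add hpa,
        show (p - 1) + ((2:ℕ):ℝ) = p + 1 by push_cast; ring]
  have hG : ∀ a : ℝ, HasDerivAt (fun a : ℝ => |a| ^ (p + 1))
      ((p + 1) * (|a| ^ (p - 1) * a)) a := by
    intro a
    have h1 := (hasDerivAt_signed_rpow hp1 a).mul (hasDerivAt_id a)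
    have h1' : HasDerivAt (fun y : ℝ => |y| ^ (p - 1) * y * y)
        (p * |a| ^ (p - 1) * a + |a| ^ (p - 1) * a * 1) a := h1
    have heqf : (fun y : ℝ => |y| ^ (p - 1) * y * y) = fun y : ℝ => |y| ^ (p + 1) :=
      funext fun y => (habs_eq y).symm
    rw [heqf] at h1'
    convert h1' using 1
    ring
  -- energy function
  set E : ℝ → ℝ := fun x => (deriv w x) ^ 2 / 2 - (w x) ^ 2 / 2 + |w x| ^ (p + 1) / (p + 1)
    with hEdef
  have hE' : ∀ x, HasDerivAt E 0 x := by
    intro x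
    have h1 := (((hw2 x).pow 2).div_const 2).sub (((hw1 x).pow 2).div_const 2)
    have h2 := ((hG (w x)).comp x (hw1 x)).div_const (p + 1)
    have h3 := h1.add h2
    refine h3.congr_deriv ?_
    rw [hww x]
    have hpne : p + 1 ≠ 0 := by linarith
    field_simp
    ring
  have hEconst : ∀ x y, E x = E y := fun x y =>
    is_const_of_deriv_eq_zero (fun t => (hE' t).differentiableAt) (fun t => (hE' t).deriv) x y
  -- E ≡ 0 via mean value points at infinity
  have hmvt : ∀ n : ℕ, ∃ ξ : ℝ, ξ ∈ Ioo (n:ℝ) (n+1) ∧ deriv w ξ = w (n+1) - w n := by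
    intro n
    obtain ⟨c, hc, hceq⟩ := exists_deriv_eq_slope w (by linarith : (n:ℝ) < n+1)
      (hw.continuous.continuousOn) (fun t _ => ((hw.differentiable (by norm_num)) t).differentiableWithinAt)
    exact ⟨c, hc, by rw [hceq]; simp⟩
  choose ξ hξmem hξeq using hmvt
  have hξtop : Tendsto ξ atTop atTop :=
    tendsto_atTop_mono (fun n => (hξmem n).1.le) tendsto_natCast_atTop_atTop
  have hwval : Tendsto (fun n => w (ξ n)) atTop (𝓝 0) := htop.comp hξtop
  have hder0 : Tendsto (fun n => deriv w (ξ n)) atTop (𝓝 0) := by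
    have h1 : Tendsto (fun n : ℕ => ((n:ℝ) + 1)) atTop atTop :=
      tendsto_atTop_add_const_right _ 1 tendsto_natCast_atTop_atTop
    have h2 : Tendsto (fun n : ℕ => w ((n:ℝ)+1) - w n) atTop (𝓝 (0 - 0)) :=
      (htop.comp h1).sub (htop.comp tendsto_natCast_atTop_atTop)
    rw [sub_zero] at h2
    exact h2.congr (fun n => (hξeq n).symm)
  have habs0 : Tendsto (fun n => |w (ξ n)| ^ (p + 1)) atTop (𝓝 0) := by
    have hc : ContinuousAt (fun t : ℝ => |t| ^ (p + 1)) 0 :=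
      (Real.continuousAt_rpow_const _ _ (Or.inr (by linarith))).comp
        continuous_abs.continuousAt
    have := hc.tendsto.comp hwval
    simpa [Real.zero_rpow (by linarith : p + 1 ≠ 0), Function.comp_def] using this
  have hE0 : E 0 = 0 := by
    have hcomb : Tendsto (fun n => E (ξ n)) atTop (𝓝 (0^2/2 - 0^2/2 + 0/(p+1))) :=
      (((hder0.pow 2).div_const 2).sub ((hwval.pow 2).div_const 2)).add
        (habs0.div_const (p+1))
    have hz : (0:ℝ)^2/2 - 0^2/2 + 0/(p+1) = 0 := by norm_num
    rw [hz] at hcomb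
    have hconst : Tendsto (fun _ : ℕ => E 0) atTop (𝓝 0) :=
      hcomb.congr (fun n => hEconst _ _)
    exact (tendsto_nhds_unique hconst tendsto_const_nhds).symm
  have hE : ∀ x, E x = 0 := fun x => (hEconst x 0).trans hE0
  -- maximum of |w|
  obtain ⟨x₁, hx₁⟩ := hne
  have habsw : Tendsto (fun x => |w x|) (cocompact ℝ) (𝓝 0) := by
    rw [cocompact_eq_atBot_atTop, tendsto_sup]
    constructor
    · simpa using hbot.abs
    · simpa using htop.abs
  have hev : ∀ᶠ x in cocompact ℝ, |w x| ≤ |w x₁| :=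
    (habsw.eventually_lt_const (abs_pos.mpr hx₁)).mono fun x hx => hx.le
  obtain ⟨x₀, hx₀⟩ := (hw.continuous.abs).exists_forall_ge' x₁ hev
  have hwx₀ : w x₀ ≠ 0 := by
    intro h
    have := hx₀ x₁
    rw [h, abs_zero] at this
    exact hx₁ (abs_eq_zero.mp (le_antisymm this (abs_nonneg _)))
  -- derivative vanishes at the max
  have hder_x₀ : deriv w x₀ = 0 := by
    have hmax : IsLocalMax (fun x => (w x) ^ 2) x₀ := Eventually.of_forall fun x => by
      have h1 : |w x| ≤ |w x₀| := hx₀ x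
      simpa [sq_abs] using pow_le_pow_left₀ (abs_nonneg _) h1 2
    have hd := hmax.deriv_eq_zero
    have hd2 : deriv (fun x => (w x) ^ 2) x₀ = 2 * w x₀ * deriv w x₀ := by
      have hh : HasDerivAt (fun x => (w x)^2) _ x₀ := (hw1 x₀).pow 2
      rw [hh.deriv]; ring
    rw [hd2] at hd
    rcases mul_eq_zero.mp hd with h | h
    · rcases mul_eq_zero.mp h with h' | h'
      · norm_num at h'
      · exact absurd h' hwx₀
    · exact h
  -- the max value equals ((p+1)/2)^(1/(p-1))
  set m : ℝ := |w x₀| with hm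
  have hmpos : 0 < m := abs_pos.mpr hwx₀
  have hmeq : m = ((p + 1) / 2) ^ (1 / (p - 1)) := by
    have h1 := hE x₀
    rw [hEdef] at h1
    simp only [hder_x₀] at h1
    have hpp : (0:ℝ) < p + 1 := by linarith
    have h2 : m ^ (p + 1) = (p + 1) / 2 * m ^ (2:ℕ) := by
      have h1' : |w x₀| ^ (p+1) / (p+1) = (w x₀)^2 / 2 := by norm_num at h1; linarith
      have h1'' : |w x₀| ^ (p+1) = (p+1)/2 * (w x₀)^2 := by
        field_simp at h1'; linarith
      rw [hm, sq_abs]; exact h1''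
    have h3 : m ^ (p + 1) = m ^ (p - 1) * m ^ (2:ℕ) := by
      rw [← Real.rpow_natCast m 2, ← Real.rpow_add hmpos,
        show (p - 1) + ((2:ℕ):ℝ) = p + 1 by push_cast; ring]
    have h4 : m ^ (p - 1) = (p + 1) / 2 := by
      have hm2 : (0:ℝ) < m ^ (2:ℕ) := by positivity
      have := h3.symm.trans h2
      exact mul_right_cancel₀ (ne_of_gt hm2) this
    rw [← h4, one_div, Real.rpow_rpow_inv hmpos.le (by linarith : p - 1 ≠ 0)]
  -- bounds
  have hb1 : ∀ x, |w x| ≤ ((p + 1) / 2) ^ (1 / (p - 1)) := fun x => hmeq ▸ hx₀ x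
  have hb2 : ∀ x, |deriv w x| ≤ ((p + 1) / 2) ^ (1 / (p - 1)) := by
    intro x
    have h1 := hE x
    rw [hEdef] at h1
    have h2 : (0:ℝ) ≤ |w x| ^ (p + 1) := Real.rpow_nonneg (abs_nonneg _) _
    have h3 : (deriv w x) ^ 2 ≤ (w x) ^ 2 := by
      have hpp : (0:ℝ) < p + 1 := by linarith
      have h4 : (0:ℝ) ≤ |w x| ^ (p+1) / (p+1) := by positivity
      simp only at h1
      nlinarith
    have h5 : (w x) ^ 2 ≤ m ^ 2 := by
      rw [hm, ← sq_abs (w x)]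
      exact pow_le_pow_left₀ (abs_nonneg _) (hx₀ x) 2
    rw [← hmeq]
    exact abs_le_of_sq_le_sq (le_trans h3 h5) hmpos.le
  -- case split on the sign of w x₀
  rcases lt_or_gt_of_ne hwx₀ with hneg | hpos
  · -- w x₀ < 0 : apply core uniqueness to -w
    refine ⟨x₀, Or.inr ?_⟩
    have hdv : deriv (fun x => -w x) = fun t => -deriv w t := by
      funext t; exact deriv.neg
    have hv1 : ∀ t, HasDerivAt (fun x => -w x) (deriv (fun x => -w x) t) t := fun t => by
      rw [hdv]; exact (hw1 t).neg
    have hv2 : ∀ t, HasDerivAt (deriv (fun x => -w x))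
        ((fun x => -w x) t - |(fun x => -w x) t| ^ (p - 1) * (fun x => -w x) t) t := fun t => by
      rw [hdv]
      have := (hw2' t).neg
      simp only [abs_neg]
      exact this.congr_deriv (by ring)
    have hval : (fun x => -w x) x₀ = ((p + 1) / 2) ^ (1 / (p - 1)) := by
      simp only
      rw [← hmeq, hm, abs_of_neg hneg]
    have hderv : deriv (fun x => -w x) x₀ = 0 := by rw [hdv]; simp [hder_x₀]
    have hbb1 : ∀ x, |(fun x => -w x) x| ≤ ((p + 1) / 2) ^ (1 / (p - 1)) := fun x => by
      simp only [abs_neg]; exact hb1 x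
    have hbb2 : ∀ x, |deriv (fun x => -w x) x| ≤ ((p + 1) / 2) ^ (1 / (p - 1)) := fun x => by
      rw [hdv]; simp only [abs_neg]; exact hb2 x
    have key := core_uniqueness hp (fun x => -w x) hv1 hv2 x₀ hval hderv hbb1 hbb2
    intro x
    have := key x
    beta_reduce at this
    linarith [this]
  · -- w x₀ > 0 : apply core uniqueness to w
    refine ⟨x₀, Or.inl ?_⟩
    have hval : w x₀ = ((p + 1) / 2) ^ (1 / (p - 1)) := by
      rw [← hmeq, hm, abs_of_pos hpos]
    exact core_uniqueness hp w hw1 hw2' x₀ hval hder_x₀ hb1 hb2
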